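/- Every σ-set X ⊆ ω^ω is Laver-null: for every Laver tree T there is a Laver subtree T′ ⊆ T whose set of branches is disjoint from X. -/

import Mathlib

def LaverBranches (T : Set (List ℕ)) : Set (ℕ → ℕ) :=
  {x | ∀ n : ℕ, (List.range n).map x ∈ T}

def IsLaverTree (T : Set (List ℕ)) : Prop :=
  (∀ t ∈ T, ∀ s : List ℕ, s <+: t → s ∈ T) ∧
  ∃ s ∈ T, ∀ t ∈ T, s <+: t → {n : ℕ | t ++ [n] ∈ T}.Infinite

/-- `X` is a σ-set: every relative `G_δ` subset of `X` is a relative `F_σ` subset of `X`. -/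
def IsSigmaSet (X : Set (ℕ → ℕ)) : Prop :=
  ∀ G : Set (ℕ → ℕ), IsGδ G →
    ∃ C : ℕ → Set (ℕ → ℕ), (∀ n, IsClosed (C n)) ∧ X ∩ G = X ∩ ⋃ n, C n

open Classical Topology
noncomputable section
namespace SL

/-! ### list lemmas -/

theorem take_concat_le {t : List ℕ} {v : ℕ} {k : ℕ} (h : k ≤ t.length) :
    (t ++ [v]).take k = t.take k := List.take_append_of_le_length h

theorem take_concat_self (t : List ℕ) (v : ℕ) : (t ++ [v]).take t.length = t := by
  rw [take_concat_le (le_refl _), List.take_length]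

theorem getElem_concat_lt {t : List ℕ} {v : ℕ} {k : ℕ} (h : k < t.length) :
    (t ++ [v])[k]'(by simp; omega) = t[k] := by
  rw [List.getElem_append_left h]

theorem getElem_concat_self (t : List ℕ) (v : ℕ) :
    (t ++ [v])[t.length]'(by simp) = v := by simp

theorem prefix_len_eq {s t : List ℕ} (h : s <+: t) (hl : t.length ≤ s.length) : t = s := by
  have h1 := List.prefix_iff_eq_take.1 h
  rw [h1] at hl ⊢
  rw [List.length_take] at hl
  have h2 : s.length ≥ t.length := by omega
  rw [List.take_of_length_le h2]

theorem prefix_trans_take {t t' s : List ℕ} (h : t' <+: t) (h2 : s <+: t)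
    (hle : t'.length ≤ s.length) : t' <+: s := by
  have h1 := List.prefix_iff_eq_take.1 h
  have h3 := List.prefix_iff_eq_take.1 h2
  rw [List.prefix_iff_eq_take]
  conv_rhs => rw [h3, List.take_take, Nat.min_eq_left hle]
  exact h1

/-! ### prefixes of branches -/

def pfx (x : ℕ → ℕ) (n : ℕ) : List ℕ := (List.range n).map x

@[simp] theorem pfx_length (x : ℕ → ℕ) (n : ℕ) : (pfx x n).length = n := by simp [pfx]

theorem pfx_succ (x : ℕ → ℕ) (n : ℕ) : pfx x (n+1) = pfx x n ++ [x n] := by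
  simp [pfx, List.range_succ]

theorem pfx_take (x : ℕ → ℕ) {k n : ℕ} (h : k ≤ n) : (pfx x n).take k = pfx x k := by
  simp [pfx, ← List.map_take, List.take_range, Nat.min_eq_left h]

theorem pfx_getElem (x : ℕ → ℕ) {k n : ℕ} (h : k < n) :
    (pfx x n)[k]'(by simpa using h) = x k := by
  simp [pfx]

theorem eq_pfx_getElem {x : ℕ → ℕ} {n : ℕ} {l : List ℕ} (h : pfx x n = l) (hn : l.length = n)
    {i : ℕ} (hi : i < n) : x i = l[i]'(by omega) := by
  subst h; exact (pfx_getElem x hi).symm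

theorem pfx_eq_of_getElem {x : ℕ → ℕ} {l : List ℕ}
    (h : ∀ i (hi : i < l.length), x i = l[i]) : pfx x l.length = l := by
  apply List.ext_getElem (by simp)
  intro i h1 h2
  rw [pfx_getElem x (by simpa using h1)]
  exact h i h2

/-! ### cylinders, canonical trees -/

def cyl (l : List ℕ) : Set (ℕ → ℕ) := {x | pfx x l.length = l}

theorem isOpen_cyl (l : List ℕ) : IsOpen (cyl l) := by
  have h : cyl l = ⋂ (i : Fin l.length), (fun x : ℕ → ℕ => x i.1) ⁻¹' {l[i.1]} := by
    ext x
    simp only [cyl, Set.mem_setOf_eq, Set.mem_iInter, Set.mem_preimage, Set.mem_singleton_iff]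
    constructor
    · intro h i
      exact eq_pfx_getElem h (by simp) i.2
    · intro h
      exact pfx_eq_of_getElem (fun i hi => h ⟨i, hi⟩)
  rw [h]
  exact isOpen_iInter_of_finite fun i => (continuous_apply i.1).isOpen_preimage _ (isOpen_discrete _)

theorem mem_cyl_self (x : ℕ → ℕ) (n : ℕ) : x ∈ cyl (pfx x n) := by
  simp [cyl]

def canonTree (D : Set (ℕ → ℕ)) : Set (List ℕ) := {t | ∃ x ∈ D, pfx x t.length = t}

theorem canonTree_of_mem {D : Set (ℕ → ℕ)} {x : ℕ → ℕ} (hx : x ∈ D) (n : ℕ) :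
    pfx x n ∈ canonTree D := ⟨x, hx, by simp⟩

theorem canonTree_prefix_closed {D : Set (ℕ → ℕ)} {t t' : List ℕ}
    (ht : t ∈ canonTree D) (h : t' <+: t) : t' ∈ canonTree D := by
  obtain ⟨x, hx, hpfx⟩ := ht
  refine ⟨x, hx, ?_⟩
  have hle := h.length_le
  rw [List.prefix_iff_eq_take] at h
  conv_rhs => rw [h, ← hpfx]
  rw [pfx_take x hle, h, List.length_take, Nat.min_eq_left hle]

theorem mem_of_all_canonTree {D : Set (ℕ → ℕ)} (hD : IsClosed D) {x : ℕ → ℕ}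
    (h : ∀ n, pfx x n ∈ canonTree D) : x ∈ D := by
  choose y hyD hy using h
  have hten : Filter.Tendsto y Filter.atTop (𝓝 x) := by
    rw [tendsto_pi_nhds]
    intro i
    apply Filter.Tendsto.congr' (f₁ := fun _ => x i) _ tendsto_const_nhds
    filter_upwards [Filter.eventually_ge_atTop (i+1)] with n hn
    have h1 := hy n
    rw [pfx_length] at h1
    have h2 := eq_pfx_getElem h1 (by simp) (i := i) (by omega)
    rw [h2, pfx_getElem _ (by omega : i < n)]
  exact hD.mem_of_tendsto hten (Filter.Eventually.of_forall hyD)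

/-! ### successor sets and the splitting -/

def A (T : Set (List ℕ)) (t : List ℕ) : Set ℕ := {v | t ++ [v] ∈ T}

def Esel (T : Set (List ℕ)) (t : List ℕ) : Set ℕ :=
  if h : (A T t).Infinite then
    Set.range (fun k => ((Set.Infinite.natEmbedding _ h (2 * k) : A T t) : ℕ)) else ∅

theorem Esel_subset (T : Set (List ℕ)) (t : List ℕ) : Esel T t ⊆ A T t := by
  rw [Esel]
  split
  · rintro v ⟨k, rfl⟩; exact Subtype.mem _
  · exact Set.empty_subset _

theorem Esel_infinite {T : Set (List ℕ)} {t : List ℕ} (h : (A T t).Infinite) :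
    (Esel T t).Infinite := by
  rw [Esel, dif_pos h]
  apply Set.infinite_range_of_injective
  intro a b hab
  have := (Set.Infinite.natEmbedding _ h).injective (Subtype.val_injective hab)
  omega

def nE (T : Set (List ℕ)) (t : List ℕ) : Set ℕ := A T t \ Esel T t

theorem nE_infinite {T : Set (List ℕ)} {t : List ℕ} (h : (A T t).Infinite) :
    (nE T t).Infinite := by
  apply Set.infinite_of_injective_forall_mem
    (f := fun k => ((Set.Infinite.natEmbedding _ h (2 * k + 1) : A T t) : ℕ))
  case hi =>
    intro a b hab
    have := (Set.Infinite.natEmbedding _ h).injective (Subtype.val_injective hab)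
    omega
  case hf =>
    intro k
    refine ⟨Subtype.mem _, ?_⟩
    rw [Esel, dif_pos h]
    rintro ⟨j, hj⟩
    have := (Set.Infinite.natEmbedding _ h).injective (Subtype.val_injective hj)
    omega

theorem nE_subset (T : Set (List ℕ)) (t : List ℕ) : nE T t ⊆ A T t := Set.diff_subset

/-! ### the Gδ set -/

def Olayer (T : Set (List ℕ)) (s : List ℕ) (n : ℕ) : Set (ℕ → ℕ) :=
  {x | pfx x n ∈ T ∧ s <+: pfx x n ∧ x n ∈ Esel T (pfx x n)}

theorem isOpen_Olayer (T : Set (List ℕ)) (s : List ℕ) (n : ℕ) : IsOpen (Olayer T s n) := by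
  rw [isOpen_iff_forall_mem_open]
  intro x hx
  refine ⟨cyl (pfx x (n+1)), ?_, isOpen_cyl _, mem_cyl_self x (n+1)⟩
  intro y hy
  have hlen : (pfx x (n+1)).length = n + 1 := pfx_length x (n+1)
  have hpfx : pfx y (n+1) = pfx x (n+1) := by
    have h := hy; rw [cyl, Set.mem_setOf_eq, hlen] at h; exact h
  have h1 : pfx y n = pfx x n := by
    rw [← pfx_take y (Nat.le_succ n), ← pfx_take x (Nat.le_succ n), hpfx]
  have h2 : y n = x n := by
    have h := congrArg (fun l => l[n]?) hpfx
    simp only [pfx, List.getElem?_map] at h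
    simpa [List.getElem?_range (Nat.lt_succ_self n)] using h
  obtain ⟨ha, hb, hc⟩ := hx
  exact ⟨h1 ▸ ha, h1 ▸ hb, by rw [h1, h2]; exact hc⟩

def Gset (T : Set (List ℕ)) (s : List ℕ) : Set (ℕ → ℕ) :=
  ⋂ N, ⋃ n, ⋃ _ : N ≤ n, Olayer T s n

theorem isGδ_Gset (T : Set (List ℕ)) (s : List ℕ) : IsGδ (Gset T s) := by
  apply IsGδ.iInter
  intro N
  exact (isOpen_iUnion fun n => isOpen_iUnion fun _ => isOpen_Olayer T s n).isGδ

theorem mem_Gset_iff (T : Set (List ℕ)) (s : List ℕ) (x : ℕ → ℕ) :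
    x ∈ Gset T s ↔ ∀ N, ∃ n, N ≤ n ∧ x ∈ Olayer T s n := by
  simp [Gset]

/-! ### ordinal rank machinery -/

def Sm (U : Set (List ℕ)) (nE' : List ℕ → Set ℕ) : Ordinal.{0} → Set (List ℕ) :=
  Ordinal.lt_wf.fix (fun α ih =>
    {u | ∃ F : Finset ℕ, ∀ v, v ∈ nE' u → u ++ [v] ∈ U → v ∉ F →
        ∃ β, ∃ hβ : β < α, u ++ [v] ∈ ih β hβ})

theorem Sm_eq (U : Set (List ℕ)) (nE' : List ℕ → Set ℕ) (α : Ordinal.{0}) :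
    Sm U nE' α = {u | ∃ F : Finset ℕ, ∀ v, v ∈ nE' u → u ++ [v] ∈ U → v ∉ F →
        ∃ β, ∃ _ : β < α, u ++ [v] ∈ Sm U nE' β} := by
  rw [Sm, WellFounded.fix_eq]

def Sml (U : Set (List ℕ)) (nE' : List ℕ → Set ℕ) (u : List ℕ) : Prop := ∃ α, u ∈ Sm U nE' α

def rnk (U : Set (List ℕ)) (nE' : List ℕ → Set ℕ) (u : List ℕ) : Ordinal.{0} :=
  if h : Sml U nE' u then Ordinal.lt_wf.min {α | u ∈ Sm U nE' α} h else 0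

theorem rnk_mem {U : Set (List ℕ)} {nE' : List ℕ → Set ℕ} {u : List ℕ} (h : Sml U nE' u) :
    u ∈ Sm U nE' (rnk U nE' u) := by
  rw [rnk, dif_pos h]; exact WellFounded.min_mem _ _ h

theorem rnk_min {U : Set (List ℕ)} {nE' : List ℕ → Set ℕ} {u : List ℕ} {β : Ordinal}
    (hβ : u ∈ Sm U nE' β) : rnk U nE' u ≤ β := by
  rw [rnk, dif_pos ⟨β, hβ⟩]
  exact le_of_not_gt (Ordinal.lt_wf.not_lt_min _ hβ)

theorem large_children (U : Set (List ℕ)) (nE' : List ℕ → Set ℕ) (u : List ℕ)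
    (h : ¬ Sml U nE' u) :
    {v | v ∈ nE' u ∧ u ++ [v] ∈ U ∧ ¬ Sml U nE' (u ++ [v])}.Infinite := by
  by_contra hninf
  have hfin : {v | v ∈ nE' u ∧ u ++ [v] ∈ U ∧ ¬ Sml U nE' (u ++ [v])}.Finite :=
    Set.not_infinite.1 hninf
  apply h
  set g : ℕ → Ordinal.{0} :=
    fun v => if hv : Sml U nE' (u ++ [v]) then rnk U nE' (u ++ [v]) + 1 else 0 with hg
  refine ⟨iSup g, ?_⟩
  rw [Sm_eq]
  refine ⟨hfin.toFinset, fun v hv hvU hvF => ?_⟩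
  have hsml : Sml U nE' (u ++ [v]) := by
    by_contra hns
    exact hvF (hfin.mem_toFinset.2 ⟨hv, hvU, hns⟩)
  refine ⟨rnk U nE' (u ++ [v]), ?_, rnk_mem hsml⟩
  calc rnk U nE' (u ++ [v]) < g v := by
        rw [hg]; simp only [dif_pos hsml]; exact lt_add_one _
    _ ≤ iSup g := le_ciSup (by exact Ordinal.bddAbove_range g) v

theorem small_step {U : Set (List ℕ)} {nE' : List ℕ → Set ℕ} {u : List ℕ} (h : Sml U nE' u) :
    ∃ F : Finset ℕ, ∀ v, v ∈ nE' u → u ++ [v] ∈ U → v ∉ F →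
      Sml U nE' (u ++ [v]) ∧ rnk U nE' (u ++ [v]) < rnk U nE' u := by
  have h1 := rnk_mem h
  rw [Sm_eq] at h1
  obtain ⟨F, hF⟩ := h1
  refine ⟨F, fun v hv hvU hvF => ?_⟩
  obtain ⟨β, hβ, hmem⟩ := hF v hv hvU hvF
  exact ⟨⟨β, hmem⟩, lt_of_le_of_lt (rnk_min hmem) hβ⟩

def kept (U : Set (List ℕ)) (nE' : List ℕ → Set ℕ) (t : List ℕ) : Set ℕ :=
  {v | v ∈ nE' t ∧ (t ++ [v] ∉ U ∨ (Sml U nE' (t ++ [v]) ∧ rnk U nE' (t ++ [v]) < rnk U nE' t))}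

theorem kept_infinite {U : Set (List ℕ)} {nE' : List ℕ → Set ℕ} {t : List ℕ}
    (hS : Sml U nE' t) (hnE : (nE' t).Infinite) : (kept U nE' t).Infinite := by
  obtain ⟨F, hF⟩ := small_step hS
  apply Set.Infinite.mono (s := nE' t \ F)
  · intro v hv
    refine ⟨hv.1, ?_⟩
    by_cases hU : t ++ [v] ∈ U
    · exact Or.inr (hF v hv.1 hU hv.2)
    · exact Or.inl hU
  · exact hnE.diff F.finite_toSet

theorem kept_subset (U : Set (List ℕ)) (nE' : List ℕ → Set ℕ) (t : List ℕ) :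
    kept U nE' t ⊆ nE' t := fun _ hv => hv.1

/-! ### the state machine -/

def eFun (s : List ℕ) (U : ℕ → Set (List ℕ)) (t : List ℕ) : ℕ × Bool :=
  if t.length ≤ s.length then (0, true)
  else
    let p := eFun s U t.dropLast
    if t ∈ U p.1 then (p.1, false) else (p.1 + 1, true)
termination_by t.length
decreasing_by
  · rw [List.length_dropLast]; omega

theorem eFun_base (s : List ℕ) (U : ℕ → Set (List ℕ)) (t : List ℕ) (h : t.length ≤ s.length) :
    eFun s U t = (0, true) := by
  rw [eFun, if_pos h]

theorem eFun_step (s : List ℕ) (U : ℕ → Set (List ℕ)) (r : List ℕ) (v : ℕ)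
    (h : s.length ≤ r.length) :
    eFun s U (r ++ [v]) =
      if r ++ [v] ∈ U (eFun s U r).1 then ((eFun s U r).1, false)
      else ((eFun s U r).1 + 1, true) := by
  rw [eFun]
  have hlen : (r ++ [v]).length = r.length + 1 := by simp
  rw [if_neg (by omega)]
  simp only [List.dropLast_concat]

theorem eFun_false_mem (s : List ℕ) (U : ℕ → Set (List ℕ)) (r : List ℕ) (v : ℕ)
    (h : s.length ≤ r.length) {m : ℕ} (hm : eFun s U (r ++ [v]) = (m, false)) :
    r ++ [v] ∈ U m ∧ (eFun s U r).1 = m := by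
  rw [eFun_step s U r v h] at hm
  by_cases hU : r ++ [v] ∈ U (eFun s U r).1
  · rw [if_pos hU] at hm
    have h1 : (eFun s U r).1 = m := (Prod.mk.injEq _ _ _ _ ▸ hm).1
    exact ⟨h1 ▸ hU, h1⟩
  · rw [if_neg hU] at hm
    exact absurd (Prod.mk.injEq _ _ _ _ ▸ hm).2 (by simp)

theorem eFun_true_succ (s : List ℕ) (U : ℕ → Set (List ℕ)) (r : List ℕ) (v : ℕ)
    (h : s.length ≤ r.length) {m : ℕ} (hm : eFun s U (r ++ [v]) = (m + 1, true)) :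
    r ++ [v] ∉ U m ∧ (eFun s U r).1 = m := by
  rw [eFun_step s U r v h] at hm
  by_cases hU : r ++ [v] ∈ U (eFun s U r).1
  · rw [if_pos hU] at hm
    exact absurd (Prod.mk.injEq _ _ _ _ ▸ hm).2 (by simp)
  · rw [if_neg hU] at hm
    have h1 : (eFun s U r).1 = m := by
      have h2 := (Prod.mk.injEq _ _ _ _ ▸ hm).1; omega
    exact ⟨h1 ▸ hU, h1⟩

/-! ### generic tree building -/

def Build (s : List ℕ) (al : List ℕ → Set ℕ) : Set (List ℕ) :=
  {t | t <+: s} ∪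
  {t | s <+: t ∧ ∀ k, s.length ≤ k → ∀ h : k < t.length, t[k] ∈ al (t.take k)}

theorem base_mem_Build (s : List ℕ) (al : List ℕ → Set ℕ) : s ∈ Build s al :=
  Or.inr ⟨List.prefix_refl s, fun k hk h => by omega⟩

theorem Build_prefix_closed (s : List ℕ) (al : List ℕ → Set ℕ) :
    ∀ t ∈ Build s al, ∀ t', t' <+: t → t' ∈ Build s al := by
  rintro t (ht | ⟨hst, hsteps⟩) t' h
  · exact Or.inl (h.trans ht)
  · rcases Nat.le_total t'.length s.length with hle | hle
    · exact Or.inl (prefix_trans_take h hst hle)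
    · right
      have h1 : t' = t.take t'.length := List.prefix_iff_eq_take.1 h
      refine ⟨prefix_trans_take hst h hle, ?_⟩
      intro k hk hklt
      have hkt : k < t.length := by
        have h3 : t'.length ≤ t.length := h.length_le
        omega
      have e1 : t'[k]'hklt = t[k]'hkt := h.getElem hklt
      have e2 : t'.take k = t.take k := by
        rw [h1, List.take_take, Nat.min_eq_left (by omega)]
      rw [e1, e2]
      exact hsteps k hk hkt

theorem snoc_mem_Build_iff {s : List ℕ} {al : List ℕ → Set ℕ} {t : List ℕ}
    (ht : t ∈ Build s al) (hst : s <+: t) (v : ℕ) :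
    t ++ [v] ∈ Build s al ↔ v ∈ al t := by
  have hsteps : ∀ k, s.length ≤ k → ∀ h : k < t.length, t[k] ∈ al (t.take k) := by
    rcases ht with ht | ht
    · have hts : t = s := prefix_len_eq hst ht.length_le
      intro k hk h; subst hts; omega
    · exact ht.2
  constructor
  · rintro (hmem | hmem)
    · exfalso
      have h3 : t.length + 1 ≤ s.length := by simpa using hmem.length_le
      have h4 := hst.length_le
      omega
    · have h5 := hmem.2 t.length (hst.length_le) (by simp)
      rwa [take_concat_self, getElem_concat_self] at h5
  · intro hv
    right
    refine ⟨hst.trans ⟨[v], rfl⟩, ?_⟩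
    intro k hk hklt
    rcases Nat.lt_or_ge k t.length with hlt | hge
    · rw [getElem_concat_lt hlt, take_concat_le (le_of_lt hlt)]
      exact hsteps k hk hlt
    · have hk2 : k = t.length := by simp at hklt; omega
      subst hk2
      rw [getElem_concat_self, take_concat_self]
      exact hv

theorem Build_unsnoc {s : List ℕ} {al : List ℕ → Set ℕ} {t : List ℕ}
    (ht : t ∈ Build s al) (hst : s <+: t) (hne : s.length < t.length) :
    ∃ r v, t = r ++ [v] ∧ r ∈ Build s al ∧ s <+: r ∧ v ∈ al r := by
  have htne : t ≠ [] := by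
    intro h; subst h; simp at hne
  refine ⟨t.dropLast, t.getLast htne, ?_, ?_, ?_, ?_⟩
  · exact (List.dropLast_concat_getLast htne).symm
  · exact Build_prefix_closed s al t ht _ (List.dropLast_prefix t)
  · refine prefix_trans_take hst (List.dropLast_prefix t) ?_
    rw [List.length_dropLast]; omega
  · rcases ht with ht | ht
    · exfalso; have := ht.length_le; omega
    · have hlt : t.length - 1 < t.length := by omega
      have hstep := ht.2 (t.length - 1) (by omega) hlt
      have e1 : t.getLast htne = t[t.length - 1]'hlt := t.getLast_eq_getElem htne
      have e2 : t.dropLast = t.take (t.length - 1) := List.dropLast_eq_take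
      rw [e1, e2]
      exact hstep

theorem Build_subset {T : Set (List ℕ)} {s : List ℕ} {al : List ℕ → Set ℕ}
    (hpc : ∀ t ∈ T, ∀ u : List ℕ, u <+: t → u ∈ T)
    (hsT : s ∈ T)
    (hal : ∀ t, s <+: t → t ∈ T → al t ⊆ {v | t ++ [v] ∈ T}) :
    Build s al ⊆ T := by
  have key : ∀ n, ∀ t ∈ Build s al, s <+: t → t.length ≤ s.length + n → t ∈ T := by
    intro n
    induction n with
    | zero =>
      intro t ht hst hlen
      rw [prefix_len_eq hst (by omega)]
      exact hsT
    | succ n ih =>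
      intro t ht hst hlen
      rcases Nat.lt_or_ge s.length t.length with hlt | hge
      · obtain ⟨r, v, rfl, hr, hsr, hv⟩ := Build_unsnoc ht hst hlt
        have hrT : r ∈ T := ih r hr hsr (by simp at hlen; omega)
        exact hal r hsr hrT hv
      · rw [prefix_len_eq hst hge]
        exact hsT
  intro t ht
  rcases ht with hpre | ⟨hst, hsteps⟩
  · exact hpc s hsT t hpre
  · exact key t.length t (Or.inr ⟨hst, hsteps⟩) hst (by omega)

theorem Build_isLaverTree {s : List ℕ} {al : List ℕ → Set ℕ}
    (hinf : ∀ t ∈ Build s al, s <+: t → (al t).Infinite) :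
    IsLaverTree (Build s al) := by
  constructor
  · exact fun t ht u hu => Build_prefix_closed s al t ht u hu
  · refine ⟨s, base_mem_Build s al, ?_⟩
    intro t ht hst
    have he : {n : ℕ | t ++ [n] ∈ Build s al} = al t := by
      ext v
      exact snoc_mem_Build_iff ht hst v
    rw [he]
    exact hinf t ht hst

theorem branch_mem {s : List ℕ} {al : List ℕ → Set ℕ} {x : ℕ → ℕ}
    (hx : x ∈ LaverBranches (Build s al)) (k : ℕ) (hk : s.length ≤ k) :
    pfx x k ∈ Build s al ∧ s <+: pfx x k ∧ x k ∈ al (pfx x k) := by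
  have h1 : pfx x k ∈ Build s al := hx k
  have h2 : s <+: pfx x k := by
    rcases h1 with hh | hh
    · rw [prefix_len_eq hh (by rw [pfx_length]; exact hk)]
    · exact hh.1
  refine ⟨h1, h2, ?_⟩
  have h3 : pfx x (k+1) ∈ Build s al := hx (k+1)
  rw [pfx_succ] at h3
  exact (snoc_mem_Build_iff h1 h2 (x k)).1 h3

/-! ### branch dynamics (the fusion argument) -/

def alII (T : Set (List ℕ)) (s : List ℕ) (U : ℕ → Set (List ℕ)) (t : List ℕ) : Set ℕ :=
  if (eFun s U t).2 then Esel T t else kept (U (eFun s U t).1) (nE T) t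

section Dynamics
variable {T : Set (List ℕ)} {s : List ℕ} {U : ℕ → Set (List ℕ)} {x : ℕ → ℕ}
variable (hal : ∀ k, s.length ≤ k → x k ∈ alII T s U (pfx x k))
include hal

theorem working_terminates {m k : ℕ} (hk : s.length ≤ k)
    (hstate : eFun s U (pfx x k) = (m, false)) :
    ∃ j, k < j ∧ eFun s U (pfx x j) = (m + 1, true) := by
  by_contra hno
  push_neg at hno
  have hall : ∀ d, eFun s U (pfx x (k + d)) = (m, false) := by
    intro d
    induction d with
    | zero => simpa using hstate
    | succ d ih =>
      have hlen : s.length ≤ (pfx x (k+d)).length := by rw [pfx_length]; omega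
      have hstep := eFun_step s U (pfx x (k+d)) (x (k+d)) hlen
      rw [← pfx_succ] at hstep
      rw [ih] at hstep
      by_cases hU : pfx x (k+d+1) ∈ U m
      · simp only [hU, if_true] at hstep
        have he : k + (d+1) = k + d + 1 := by omega
        rw [he, hstep]
      · simp only [hU, if_false] at hstep
        exact absurd hstep (hno (k+d+1) (by omega))
  have hdesc : ∀ d, rnk (U m) (nE T) (pfx x (k + d + 1)) < rnk (U m) (nE T) (pfx x (k + d)) := by
    intro d
    have h1 := hall d
    have hmem := hal (k + d) (by omega)
    rw [alII, h1] at hmem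
    simp only [if_false] at hmem
    have hchild : pfx x (k + d + 1) ∈ U m := by
      have h2 := hall (d+1)
      have he : k + (d+1) = k + d + 1 := by omega
      rw [he] at h2
      have hh := (eFun_false_mem s U (pfx x (k+d)) (x (k+d)) (by rw [pfx_length]; omega)
        (by rw [← pfx_succ]; exact h2)).1
      rw [← pfx_succ] at hh
      exact hh
    rcases hmem.2 with hnot | ⟨_, hlt⟩
    · rw [pfx_succ] at hchild; exact absurd hchild hnot
    · rw [← pfx_succ] at hlt; exact hlt
  set f : ℕ → Ordinal.{0} := fun d => rnk (U m) (nE T) (pfx x (k + d)) with hf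
  have hdec : ∀ d, f (d+1) < f d := by
    intro d
    have h3 := hdesc d
    simp only [hf]
    have he : k + (d+1) = k + d + 1 := by omega
    rw [he]
    exact h3
  obtain ⟨d, hd⟩ := Ordinal.lt_wf.min_mem (Set.range f) ⟨f 0, ⟨0, rfl⟩⟩
  exact Ordinal.lt_wf.not_lt_min (Set.range f) ⟨d+1, rfl⟩ (hd ▸ hdec d)

theorem reach (m : ℕ) : ∃ k, s.length ≤ k ∧ eFun s U (pfx x k) = (m, true) := by
  induction m with
  | zero =>
    exact ⟨s.length, le_refl _, eFun_base s U _ (by rw [pfx_length])⟩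
  | succ m ih =>
    obtain ⟨k, hk, hstate⟩ := ih
    have hlen : s.length ≤ (pfx x k).length := by rw [pfx_length]; exact hk
    have hstep := eFun_step s U (pfx x k) (x k) hlen
    rw [← pfx_succ, hstate] at hstep
    by_cases hU : pfx x (k+1) ∈ U m
    · simp only [hU, if_true] at hstep
      obtain ⟨j, hj, hjs⟩ := working_terminates hal (m := m) (k := k+1) (by omega) hstep
      exact ⟨j, by omega, hjs⟩
    · simp only [hU, if_false] at hstep
      exact ⟨k+1, by omega, hstep⟩

theorem escapes (m : ℕ) : ∃ j, pfx x j ∉ U m := by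
  obtain ⟨k, hk, hstate⟩ := reach hal (m+1)
  have hk2 : s.length < k := by
    rcases Nat.lt_or_ge s.length k with h | h
    · exact h
    · exfalso
      have hke : k = s.length := by omega
      subst hke
      rw [eFun_base s U _ (by rw [pfx_length])] at hstate
      simp at hstate
  obtain ⟨j, rfl⟩ : ∃ j, k = j + 1 := ⟨k - 1, by omega⟩
  have hlen : s.length ≤ (pfx x j).length := by rw [pfx_length]; omega
  have hq := (eFun_true_succ s U (pfx x j) (x j) hlen (by rw [← pfx_succ]; exact hstate)).1
  rw [← pfx_succ] at hq
  exact ⟨j + 1, hq⟩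

theorem infinitely_E (N : ℕ) :
    ∃ n, N ≤ n ∧ s.length ≤ n ∧ (eFun s U (pfx x n)).2 = true := by
  have hinj : Function.Injective (fun m => Classical.choose (reach hal m)) := by
    intro m m' he
    have h1 := Classical.choose_spec (reach hal m)
    have h2 := Classical.choose_spec (reach hal m')
    simp only at he
    rw [he] at h1
    have h3 := h1.2.symm.trans h2.2
    have h4 := congrArg Prod.fst h3
    simpa using h4
  have hinf := Set.infinite_range_of_injective hinj
  obtain ⟨n, hmem, hn⟩ := hinf.exists_gt N
  obtain ⟨m, rfl⟩ := hmem
  have hs := Classical.choose_spec (reach hal m)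
  exact ⟨_, le_of_lt hn, hs.1, by rw [hs.2]⟩

end Dynamics
end SL
end

theorem stmt2 (X : Set (ℕ → ℕ)) (h : IsSigmaSet X) :
    ∀ T : Set (List ℕ), IsLaverTree T →
      ∃ T' ⊆ T, IsLaverTree T' ∧ LaverBranches T' ∩ X = ∅ := by
  classical
  intro T hT
  obtain ⟨hpc, s, hsT, hst⟩ := hT
  obtain ⟨C, hCcl, hXG⟩ := h (SL.Gset T s) (SL.isGδ_Gset T s)
  set U : ℕ → Set (List ℕ) := fun m => SL.canonTree (C m) with hU
  by_cases hI : ∃ m u, u ∈ T ∧ s <+: u ∧ u ∈ U m ∧ ¬ SL.Sml (U m) (SL.nE T) u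
  · -- Case I : a "large" node exists; all-non-E subtree inside C m avoids X
    obtain ⟨m, u, huT, hsu, huU, huL⟩ := hI
    set al : List ℕ → Set ℕ :=
      fun t => {v | v ∈ SL.nE T t ∧ t ++ [v] ∈ U m ∧ ¬ SL.Sml (U m) (SL.nE T) (t ++ [v])}
      with hal
    -- invariant along the tree
    have hinv : ∀ t ∈ SL.Build u al, u <+: t → t ∈ U m ∧ ¬ SL.Sml (U m) (SL.nE T) t := by
      intro t ht hut
      rcases Nat.lt_or_ge u.length t.length with hlt | hge
      · obtain ⟨r, v, rfl, _, _, hv⟩ := SL.Build_unsnoc ht hut hlt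
        exact ⟨hv.2.1, hv.2.2⟩
      · rw [SL.prefix_len_eq hut hge]
        exact ⟨huU, huL⟩
    have hVsub : SL.Build u al ⊆ T := by
      apply SL.Build_subset hpc huT
      intro t _ _ v hv
      exact hv.1.1
    have hVLaver : IsLaverTree (SL.Build u al) := by
      apply SL.Build_isLaverTree
      intro t ht hut
      obtain ⟨htU, htL⟩ := hinv t ht hut
      exact SL.large_children (U m) (SL.nE T) t htL
    refine ⟨SL.Build u al, hVsub, hVLaver, ?_⟩
    ext x
    simp only [Set.mem_inter_iff, Set.mem_empty_iff_false, iff_false, not_and]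
    intro hxV hxX
    -- x ∈ C m
    have hxall : ∀ n, SL.pfx x n ∈ U m := by
      intro n
      rcases Nat.le_total n u.length with hle | hle
      · -- pfx x n is a prefix of u
        have hb := (SL.branch_mem hxV u.length (le_refl _)).2.1
        have hueq : SL.pfx x u.length = u :=
          SL.prefix_len_eq hb (by rw [SL.pfx_length])
        have hpre : SL.pfx x n <+: u := by
          rw [← hueq, ← SL.pfx_take x hle]
          exact List.take_prefix _ _
        exact SL.canonTree_prefix_closed huU hpre
      · exact (hinv (SL.pfx x n) (hxV n) (SL.branch_mem hxV n (by omega)).2.1 |>.1)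
    have hxC : x ∈ C m := SL.mem_of_all_canonTree (hCcl m) hxall
    -- x ∉ Gset
    have hxnG : x ∉ SL.Gset T s := by
      rw [SL.mem_Gset_iff]
      push_neg
      refine ⟨u.length, ?_⟩
      intro n hn
      have hb := (SL.branch_mem hxV n hn).2.2
      intro hO
      exact (hb.1.2) hO.2.2
    have : x ∈ X ∩ ⋃ n, C n := ⟨hxX, Set.mem_iUnion.2 ⟨m, hxC⟩⟩
    rw [← hXG] at this
    exact hxnG this.2
  · -- Case II : everything small; run the fusion machine
    push_neg at hI
    set al : List ℕ → Set ℕ := SL.alII T s U with hal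
    have hBsub : SL.Build s al ⊆ T := by
      apply SL.Build_subset hpc hsT
      intro t _ _ v hv
      rw [hal, SL.alII] at hv
      split at hv
      · exact SL.Esel_subset T t hv
      · exact (SL.nE_subset T t) ((SL.kept_subset _ _ t) hv)
    have hBLaver : IsLaverTree (SL.Build s al) := by
      apply SL.Build_isLaverTree
      intro t ht hstt
      have htT : t ∈ T := hBsub ht
      have hAinf : (SL.A T t).Infinite := hst t htT hstt
      rw [hal, SL.alII]
      rcases hb : (SL.eFun s U t) with ⟨m, b⟩
      cases b
      · -- working state: t ∈ U m, small
        simp only [hb, if_false]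
        have hlen : s.length < t.length := by
          by_contra hc
          push_neg at hc
          rw [SL.eFun_base s U t hc] at hb
          simp at hb
        have htne : t ≠ [] := by intro hh; subst hh; simp at hlen
        have hdec : t = t.dropLast ++ [t.getLast htne] :=
          (List.dropLast_concat_getLast htne).symm
        have htU : t ∈ U m := by
          have hdl : s.length ≤ t.dropLast.length := by
            rw [List.length_dropLast]; omega
          have := (SL.eFun_false_mem s U t.dropLast (t.getLast htne) hdl
            (by rw [← hdec]; exact hb)).1
          rw [← hdec] at this
          exact this
        have hsml : SL.Sml (U m) (SL.nE T) t := hI m t htT hstt htU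
        exact SL.kept_infinite hsml (SL.nE_infinite hAinf)
      · simp only [hb, if_true]
        exact SL.Esel_infinite hAinf
    refine ⟨SL.Build s al, hBsub, hBLaver, ?_⟩
    ext x
    simp only [Set.mem_inter_iff, Set.mem_empty_iff_false, iff_false, not_and]
    intro hxB hxX
    have halx : ∀ k, s.length ≤ k → x k ∈ SL.alII T s U (SL.pfx x k) := by
      intro k hk
      exact (SL.branch_mem hxB k hk).2.2
    -- x ∈ Gset
    have hxG : x ∈ SL.Gset T s := by
      rw [SL.mem_Gset_iff]
      intro N
      obtain ⟨n, hNn, hsn, hE⟩ := SL.infinitely_E halx N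
      refine ⟨n, hNn, ?_, ?_, ?_⟩
      · exact hBsub (hxB n)
      · exact (SL.branch_mem hxB n hsn).2.1
      · have hv := halx n hsn
        rw [SL.alII, hE] at hv
        simpa using hv
    -- but x escapes every C m
    have : x ∈ X ∩ ⋃ n, C n := by
      rw [← hXG]; exact ⟨hxX, hxG⟩
    obtain ⟨m, hxC⟩ := Set.mem_iUnion.1 this.2
    obtain ⟨j, hj⟩ := SL.escapes halx m
    exact hj (SL.canonTree_of_mem hxC j)
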